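/- Let K be a positive integer and θ_1,...,θ_K ∈ {0,1}. Define a = Σ_{j=1}^{K} 3^{-j-1}·θ_j. Then a ∈ [0, 2/9), and for every k ∈ {1,...,K}, ϱ₃(3^k · a) = θ_k. -/

import Mathlib

open Real

/-- T̃(t) = 0 for t > cos(4π/9), 1 − t/cos(4π/9) for 0 ≤ t ≤ cos(4π/9), 1 for t < 0. -/
noncomputable def Ttilde (t : ℝ) : ℝ :=
  if t > Real.cos (4 * Real.pi / 9) then 0
  else if 0 ≤ t then 1 - t / Real.cos (4 * Real.pi / 9)
  else 1

/-- ϱ₃(x) = T̃(cos(2πx)). -/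
noncomputable def rho3 (x : ℝ) : ℝ := Ttilde (Real.cos (2 * Real.pi * x))

lemma geom_aux (θ : ℕ → ℝ) (hθ : ∀ j, θ j = 0 ∨ θ j = 1) (k : ℕ) :
    ∀ n : ℕ, (∑ j ∈ Finset.Ioc k (k+n), (3:ℝ) ^ ((k:ℤ) - j - 1) * θ j)
      ≤ 1/6 - (1/2) * (3:ℝ) ^ (-(n:ℤ) - 1) := by
  intro n
  induction n with
  | zero => norm_num
  | succ n ih =>
    rw [show k + (n+1) = (k+n) + 1 from rfl,
      Finset.sum_Ioc_succ_top (Nat.le_add_right k n)]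
    have hterm : (3:ℝ) ^ ((k:ℤ) - ((k+n+1 : ℕ) : ℤ) - 1) * θ (k+n+1) ≤ (3:ℝ) ^ (-(n:ℤ) - 2) := by
      have he : (k:ℤ) - ((k+n+1 : ℕ) : ℤ) - 1 = -(n:ℤ) - 2 := by push_cast; ring
      rw [he]
      rcases hθ (k+n+1) with h | h <;> rw [h]
      · rw [mul_zero]; positivity
      · simp
    have h1 : (3:ℝ) ^ (-(n:ℤ) - 1) = 3 * (3:ℝ) ^ (-(n:ℤ) - 2) := by
      rw [show (-(n:ℤ) - 1) = 1 + (-(n:ℤ) - 2) by ring, zpow_add₀ (by norm_num : (3:ℝ) ≠ 0)]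
      norm_num
    have h2 : (-((n+1 : ℕ) : ℤ) - 1) = -(n:ℤ) - 2 := by push_cast; ring
    rw [h2]
    linarith [ih, hterm]

lemma sum_nonneg_aux (θ : ℕ → ℝ) (hθ : ∀ j, θ j = 0 ∨ θ j = 1) (k : ℕ) (s : Finset ℕ) :
    0 ≤ ∑ j ∈ s, (3:ℝ) ^ ((k:ℤ) - j - 1) * θ j := by
  apply Finset.sum_nonneg
  intro j _
  rcases hθ j with h | h <;> rw [h] <;> positivity

theorem stmt2 (K : ℕ) (hK : 0 < K) (θ : ℕ → ℝ)
    (hθ : ∀ j, θ j ∈ ({0, 1} : Set ℝ)) :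
    (∑ j ∈ Finset.Icc 1 K, (3:ℝ) ^ (-(j:ℤ) - 1) * θ j) ∈ Set.Ico (0:ℝ) (2/9) ∧
    ∀ k ∈ Finset.Icc 1 K,
      rho3 ((3:ℝ) ^ k * ∑ j ∈ Finset.Icc 1 K, (3:ℝ) ^ (-(j:ℤ) - 1) * θ j) = θ k := by
  have hθ' : ∀ j, θ j = 0 ∨ θ j = 1 := by
    intro j; rcases hθ j with h | h
    · exact Or.inl h
    · exact Or.inr h
  have hπ := Real.pi_pos
  have h3 : (3:ℝ) ≠ 0 := by norm_num
  constructor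
  · constructor
    · apply Finset.sum_nonneg
      intro j _
      rcases hθ' j with h | h <;> rw [h] <;> positivity
    · have hb := geom_aux θ hθ' 0 K
      simp only [Nat.cast_zero, zero_add, zero_sub] at hb
      rw [show Finset.Icc 1 K = Finset.Ioc 0 K from Finset.Icc_add_one_left_eq_Ioc 0 K]
      have hp : (0:ℝ) < (3:ℝ) ^ (-(K:ℤ) - 1) := by positivity
      linarith
  · intro k hk
    obtain ⟨hk1, hkK⟩ := Finset.mem_Icc.mp hk
    have ha : (3:ℝ)^k * ∑ j ∈ Finset.Icc 1 K, (3:ℝ) ^ (-(j:ℤ) - 1) * θ j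
        = ∑ j ∈ Finset.Icc 1 K, (3:ℝ) ^ ((k:ℤ) - j - 1) * θ j := by
      rw [Finset.mul_sum]
      apply Finset.sum_congr rfl
      intro j _
      rw [← mul_assoc, ← zpow_natCast (3:ℝ) k, ← zpow_add₀ h3]
      congr 1
      ring
    obtain ⟨k', rfl⟩ : ∃ k', k = k' + 1 := ⟨k - 1, by omega⟩
    set k := k' + 1 with hkdef
    -- integer part
    obtain ⟨N, hN⟩ : ∃ N : ℤ, (∑ j ∈ Finset.Ioc 0 k', (3:ℝ) ^ ((k:ℤ) - j - 1) * θ j) = N := by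
      refine ⟨∑ j ∈ Finset.Ioc 0 k', 3 ^ (k' - j) * (if θ j = 0 then 0 else 1), ?_⟩
      push_cast
      apply Finset.sum_congr rfl
      intro j hj
      obtain ⟨hj1, hj2⟩ := Finset.mem_Ioc.mp hj
      have he : (k:ℤ) - (j:ℤ) - 1 = ((k' - j : ℕ) : ℤ) := by omega
      rw [he, zpow_natCast]
      rcases hθ' j with h | h <;> simp [h]
    -- tail
    set t : ℝ := ∑ j ∈ Finset.Ioc k K, (3:ℝ) ^ ((k:ℤ) - j - 1) * θ j with htdef
    have ht0 : 0 ≤ t := sum_nonneg_aux θ hθ' k _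
    have ht1 : t ≤ 1/6 := by
      have hb := geom_aux θ hθ' k (K - k)
      rw [show k + (K - k) = K by omega] at hb
      have hp : (0:ℝ) < (3:ℝ) ^ (-((K - k : ℕ):ℤ) - 1) := by positivity
      rw [htdef]
      linarith
    have hθk : (3:ℝ) ^ ((k:ℤ) - k - 1) * θ k = θ k / 3 := by
      rw [show (k:ℤ) - k - 1 = -1 by ring, zpow_neg_one]
      ring
    have hdecomp : (∑ j ∈ Finset.Icc 1 K, (3:ℝ) ^ ((k:ℤ) - j - 1) * θ j)
        = (N:ℝ) + θ k / 3 + t := by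
      calc (∑ j ∈ Finset.Icc 1 K, (3:ℝ) ^ ((k:ℤ) - j - 1) * θ j)
          = ∑ j ∈ Finset.Ioc 0 K, (3:ℝ) ^ ((k:ℤ) - j - 1) * θ j := by
            rw [show Finset.Icc 1 K = Finset.Ioc 0 K from Finset.Icc_add_one_left_eq_Ioc 0 K]
        _ = (∑ j ∈ Finset.Ioc 0 k, (3:ℝ) ^ ((k:ℤ) - j - 1) * θ j)
            + ∑ j ∈ Finset.Ioc k K, (3:ℝ) ^ ((k:ℤ) - j - 1) * θ j :=
            (Finset.sum_Ioc_consecutive _ (Nat.zero_le k) hkK).symm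
        _ = ((∑ j ∈ Finset.Ioc 0 k', (3:ℝ) ^ ((k:ℤ) - j - 1) * θ j)
            + (3:ℝ) ^ ((k:ℤ) - k - 1) * θ k) + t := by
            rw [Finset.sum_Ioc_succ_top (Nat.zero_le k')]
        _ = (N:ℝ) + θ k / 3 + t := by rw [hN, hθk]
    rw [ha, hdecomp]
    have hcos : Real.cos (2 * Real.pi * ((N:ℝ) + θ k / 3 + t))
        = Real.cos (2 * Real.pi * (θ k / 3 + t)) := by
      rw [show 2 * Real.pi * ((N:ℝ) + θ k / 3 + t)
          = 2 * Real.pi * (θ k / 3 + t) + N * (2 * Real.pi) by ring]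
      exact Real.cos_add_int_mul_two_pi _ N
    have hc9 : 0 < Real.cos (4 * Real.pi / 9) :=
      Real.cos_pos_of_mem_Ioo ⟨by linarith, by linarith⟩
    rcases hθ' k with hcase | hcase
    · rw [rho3, hcos, hcase]
      have hgt : Real.cos (4 * Real.pi / 9) < Real.cos (2 * Real.pi * (0 / 3 + t)) := by
        apply Real.strictAntiOn_cos
        · constructor <;> nlinarith
        · constructor <;> nlinarith
        · nlinarith
      rw [Ttilde, if_pos hgt]
    · rw [rho3, hcos, hcase]
      have hneg : Real.cos (2 * Real.pi * (1 / 3 + t)) < 0 := by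
        apply Real.cos_neg_of_pi_div_two_lt_of_lt <;> nlinarith
      rw [Ttilde, if_neg (by push_neg; linarith), if_neg (by linarith)]
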